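/- For any z ∈ ℂ and any measurable function m : ℝ → ℝ with 0 < c ≤ m(t) ≤ C, the integral ∫_ℝ |log|1 - z/t| + χ(t)·Re(z)/t| · m(t) dt is finite, where χ(t) = 1 - 1_{[-1,1]}(t). -/

import Mathlib

open MeasureTheory Set

lemma neg_log_le (t : ℝ) (ht : 0 < t) : -Real.log t ≤ 2 * (Real.sqrt t)⁻¹ := by
  have h1 : Real.log (Real.sqrt t)⁻¹ ≤ (Real.sqrt t)⁻¹ - 1 :=
    Real.log_le_sub_one_of_pos (by positivity)
  have h2 : Real.log (Real.sqrt t)⁻¹ = -(Real.log t / 2) := by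
    rw [Real.log_inv, Real.log_sqrt ht.le]
  nlinarith [inv_nonneg.2 (Real.sqrt_nonneg t)]

lemma L1 (b : ℝ) (hb : 0 ≤ b) : IntervalIntegrable Real.log volume 0 b := by
  have hg : IntervalIntegrable (fun t : ℝ => 2 * t ^ (-(1:ℝ)/2) + |Real.log b|) volume 0 b :=
    ((intervalIntegral.intervalIntegrable_rpow' (by norm_num)).const_mul 2).add intervalIntegrable_const
  refine hg.mono_fun' Real.measurable_log.aestronglyMeasurable ?_
  rw [Filter.EventuallyLE, ae_restrict_iff' measurableSet_uIoc]
  refine ae_of_all _ fun t ht => ?_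
  rw [uIoc_of_le hb] at ht
  have ht0 : 0 < t := ht.1
  have key : -Real.log t ≤ 2 * t ^ (-(1:ℝ)/2) := by
    have : t ^ (-(1:ℝ)/2) = (Real.sqrt t)⁻¹ := by
      rw [show (-(1:ℝ)/2) = -(1/2 : ℝ) by norm_num, Real.rpow_neg ht0.le, Real.sqrt_eq_rpow]
    rw [this]; exact neg_log_le t ht0
  have hpos : 0 ≤ 2 * t ^ (-(1:ℝ)/2) := by positivity
  rcases le_or_gt t 1 with h1 | h1
  · have : Real.log t ≤ 0 := Real.log_nonpos ht0.le h1
    simp only [Real.norm_eq_abs, abs_of_nonpos this]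
    calc -Real.log t ≤ 2 * t ^ (-(1:ℝ)/2) := key
      _ ≤ _ := le_add_of_nonneg_right (abs_nonneg _)
  · have h2 : Real.log t ≤ |Real.log b| :=
      le_trans (Real.log_le_log (by linarith) ht.2) (le_abs_self _)
    simp only [Real.norm_eq_abs, abs_of_nonneg (Real.log_nonneg h1.le)]
    linarith

lemma L2 (a b : ℝ) : IntervalIntegrable (fun t : ℝ => Real.log |t|) volume a b := by
  have key : ∀ c : ℝ, 0 ≤ c → IntervalIntegrable (fun t : ℝ => Real.log |t|) volume 0 c := by
    intro c hc
    rw [intervalIntegrable_iff]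
    refine (intervalIntegrable_iff.1 (L1 c hc)).congr_fun (fun t ht => ?_)
      measurableSet_uIoc
    rw [uIoc_of_le hc] at ht
    rw [abs_of_pos ht.1]
  have key2 : ∀ c : ℝ, IntervalIntegrable (fun t : ℝ => Real.log |t|) volume 0 c := by
    intro c
    rcases le_or_gt 0 c with hc | hc
    · exact key c hc
    · have := key (-c) (by linarith)
      rw [IntervalIntegrable.iff_comp_neg] at this
      simpa using this
  exact (key2 a).symm.trans (key2 b)

lemma L3 (z : ℂ) (a b : ℝ) :
    IntervalIntegrable (fun t : ℝ => Real.log (‖(t : ℂ) - z‖)) volume a b := by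
  rcases eq_or_ne z.im 0 with him | him
  · have hz : z = (z.re : ℂ) := Complex.ext (by simp) (by simp [him])
    have habs : ∀ t : ℝ, ‖(t : ℂ) - z‖ = |t - z.re| := by
      intro t
      conv_lhs => rw [hz, ← Complex.ofReal_sub, Complex.norm_real, Real.norm_eq_abs]
    have := (L2 (a - z.re) (b - z.re)).comp_sub_right z.re
    simp only [sub_add_cancel] at this
    refine IntervalIntegrable.congr_ae this ?_
    refine ae_of_all _ fun t => ?_
    simp only [habs t, Complex.ofReal_re]
  · have hcont : Continuous fun t : ℝ => Real.log (‖(t : ℂ) - z‖) := by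
      refine Continuous.log (continuous_norm.comp (by fun_prop)) fun t => ?_
      simp only [ne_eq, norm_eq_zero, sub_eq_zero]
      intro h
      exact him (by rw [← h]; simp)
    exact hcont.intervalIntegrable a b

/-- `χ(t) = 1 - 1_{[-1,1]}(t)`. -/
noncomputable def chi (t : ℝ) : ℝ := if t ∈ Set.Icc (-1 : ℝ) 1 then 0 else 1

lemma measurable_chi : Measurable chi :=
  Measurable.ite measurableSet_Icc measurable_const measurable_const

lemma chi_eq_one {t : ℝ} (ht : 1 < |t|) : chi t = 1 := by
  rw [chi, if_neg]
  rw [mem_Icc, ← abs_le]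
  exact not_le.2 ht

section Fdef
variable (z : ℂ)

noncomputable def Ff (t : ℝ) : ℝ :=
  |Real.log (‖1 - z / (t : ℂ)‖) + chi t * z.re / t|

lemma measurable_Ff : Measurable (Ff z) := by
  apply Measurable.abs
  apply Measurable.add
  · apply Real.measurable_log.comp
    exact continuous_norm.measurable.comp
      (measurable_const.sub (measurable_const.div Complex.measurable_ofReal))
  · exact (measurable_chi.mul measurable_const).div measurable_id

lemma Ff_tail_bound {t : ℝ} (ht : 1 + 2 * ‖z‖ < |t|) :
    Ff z t ≤ 2 * (‖z‖) ^ 2 * (1 + t ^ 2)⁻¹ := by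
  have hz0 : (0:ℝ) ≤ ‖z‖ := norm_nonneg z
  have ht1 : 1 < |t| := lt_of_le_of_lt (by linarith) ht
  have ht0 : t ≠ 0 := by intro h; rw [h] at ht1; simp at ht1; linarith
  set w : ℂ := -(z / (t : ℂ)) with hw
  have hwn : ‖w‖ = ‖z‖ / |t| := by
    rw [hw, norm_neg]
    simp [norm_div, Complex.norm_real]
  have hwhalf : ‖w‖ ≤ 1 / 2 := by
    rw [hwn, div_le_div_iff₀ (lt_trans one_pos ht1) two_pos]
    nlinarith
  have hwlt : ‖w‖ < 1 := lt_of_le_of_lt hwhalf (by norm_num)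
  have key : Real.log (‖1 - z / (t : ℂ)‖) + chi t * z.re / t
      = (Complex.log (1 + w) - w).re := by
    rw [chi_eq_one ht1, one_mul]
    have h1 : (1 : ℂ) + w = 1 - z / (t : ℂ) := by rw [hw]; ring
    rw [Complex.sub_re, h1, Complex.log_re]
    have : w.re = -(z.re / t) := by
      rw [hw, Complex.neg_re, Complex.div_ofReal_re]
    rw [this]
    ring
  rw [Ff, key]
  calc |(Complex.log (1 + w) - w).re| ≤ ‖Complex.log (1 + w) - w‖ :=
        Complex.abs_re_le_norm _
    _ ≤ ‖w‖ ^ 2 * (1 - ‖w‖)⁻¹ / 2 := Complex.norm_log_one_add_sub_self_le hwlt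
    _ ≤ ‖w‖ ^ 2 := by
        have h2 : (1 - ‖w‖)⁻¹ ≤ 2 := by
          rw [inv_le_comm₀ (by linarith) two_pos]
          linarith
        nlinarith [sq_nonneg ‖w‖]
    _ ≤ 2 * (‖z‖) ^ 2 * (1 + t ^ 2)⁻¹ := by
        rw [hwn, div_pow, sq_abs, div_le_iff₀ (by positivity : (0:ℝ) < t ^ 2)]
        have h3 : 1 + t ^ 2 ≤ 2 * t ^ 2 := by nlinarith [sq_abs t]
        have hi : (0:ℝ) < (1 + t ^ 2)⁻¹ := by positivity
        have hinv : (1 + t ^ 2)⁻¹ * (1 + t ^ 2) = 1 := inv_mul_cancel₀ (by positivity)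
        have e1 : ‖z‖ ^ 2 * ((1 + t ^ 2)⁻¹ * (1 + t ^ 2)) = ‖z‖ ^ 2 := by
          rw [hinv, mul_one]
        nlinarith [mul_le_mul_of_nonneg_left h3 (mul_nonneg (sq_nonneg (‖z‖)) hi.le)]
end Fdef

section Main
variable (z : ℂ)

lemma Ff_compact_bound {t : ℝ} (ht0 : t ≠ 0) (htz : (t : ℂ) ≠ z) :
    Ff z t ≤ |Real.log (‖(t : ℂ) - z‖)| + |Real.log (|t|)| + |z.re| := by
  have htc : (t : ℂ) ≠ 0 := Complex.ofReal_ne_zero.2 ht0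
  have h1 : 1 - z / (t : ℂ) = ((t : ℂ) - z) / (t : ℂ) := by field_simp
  have h2 : ‖1 - z / (t : ℂ)‖ = ‖(t : ℂ) - z‖ / |t| := by
    rw [h1, norm_div, Complex.norm_real, Real.norm_eq_abs]
  have h3 : Real.log (‖1 - z / (t : ℂ)‖)
      = Real.log (‖(t : ℂ) - z‖) - Real.log |t| := by
    rw [h2, Real.log_div (by simpa [sub_eq_zero] using htz) (abs_ne_zero.2 ht0)]
  have h4 : |chi t * z.re / t| ≤ |z.re| := by
    by_cases hmem : t ∈ Set.Icc (-1 : ℝ) 1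
    · simp [chi, hmem]
    · rw [chi, if_neg hmem, one_mul, abs_div]
      have h5 : 1 ≤ |t| := by
        rw [Set.mem_Icc, ← abs_le] at hmem
        exact (not_le.1 hmem).le
      calc |z.re| / |t| ≤ |z.re| / 1 := by gcongr
        _ = |z.re| := div_one _
  rw [Ff, h3]
  calc |Real.log (‖(t : ℂ) - z‖) - Real.log (|t|) + chi t * z.re / t|
      ≤ |Real.log (‖(t : ℂ) - z‖) - Real.log (|t|)| + |chi t * z.re / t| :=
        abs_add_le _ _
    _ ≤ (|Real.log (‖(t : ℂ) - z‖)| + |Real.log (|t|)|) + |z.re| := by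
        exact add_le_add (abs_sub _ _) h4

lemma Ff_nonneg (t : ℝ) : 0 ≤ Ff z t := abs_nonneg _

lemma Ff_integrable : Integrable (Ff z) := by
  set T : ℝ := 1 + 2 * ‖z‖ with hT
  have hz0 : (0:ℝ) ≤ ‖z‖ := norm_nonneg z
  have hT1 : (1:ℝ) ≤ T := by rw [hT]; linarith
  have hTpos : (0:ℝ) < T := lt_of_lt_of_le one_pos hT1
  -- compact part
  have hIoc : ∀ f : ℝ → ℝ, IntervalIntegrable f volume (-T) T →
      IntegrableOn f (Icc (-T) T) := by
    intro f hf
    rw [intervalIntegrable_iff, uIoc_of_le (by linarith)] at hf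
    rwa [integrableOn_Icc_iff_integrableOn_Ioc]
  have g1 : IntegrableOn (fun t : ℝ => |Real.log (‖(t : ℂ) - z‖)|)
      (Icc (-T) T) := (hIoc _ (L3 z (-T) T)).abs
  have g2 : IntegrableOn (fun t : ℝ => |Real.log (|t|)|) (Icc (-T) T) :=
    (hIoc _ (L2 (-T) T)).abs
  have g3 : IntegrableOn (fun _ : ℝ => |z.re|) (Icc (-T) T) :=
    integrableOn_const measure_Icc_lt_top.ne
  have hG := (g1.add g2).add g3
  have hnull : volume ({0, z.re} : Set ℝ) = 0 :=
    ((Set.finite_singleton z.re).insert 0).measure_zero _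
  have hae : ∀ᵐ t : ℝ, ‖Ff z t‖ ≤ |Real.log (‖(t : ℂ) - z‖)|
      + |Real.log (|t|)| + |z.re| := by
    rw [ae_iff]
    refine measure_mono_null (fun t htm => ?_) hnull
    simp only [Set.mem_setOf_eq, not_le] at htm
    by_contra hts
    simp only [Set.mem_insert_iff, Set.mem_singleton_iff, not_or] at hts
    have ht0 : t ≠ 0 := hts.1
    have htz : (t : ℂ) ≠ z := by
      intro h
      exact hts.2 (by rw [← h]; simp)
    have := Ff_compact_bound z ht0 htz
    rw [Real.norm_eq_abs, abs_of_nonneg (Ff_nonneg z t)] at htm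
    linarith
  have hcompact : IntegrableOn (Ff z) (Icc (-T) T) :=
    Integrable.mono' hG ((measurable_Ff z).aestronglyMeasurable.restrict)
      (ae_restrict_of_ae hae)
  -- tail part
  have hgt : IntegrableOn (fun t : ℝ => 2 * (‖z‖) ^ 2 * (1 + t ^ 2)⁻¹)
      (Icc (-T) T)ᶜ := (integrable_inv_one_add_sq.const_mul _).integrableOn
  have htail : IntegrableOn (Ff z) (Icc (-T) T)ᶜ := by
    refine Integrable.mono' hgt ((measurable_Ff z).aestronglyMeasurable.restrict) ?_
    rw [ae_restrict_iff' measurableSet_Icc.compl]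
    refine ae_of_all _ fun t htm => ?_
    have habs : T < |t| := by
      simp only [Set.mem_compl_iff, Set.mem_Icc, not_and_or, not_le] at htm
      rcases htm with h | h
      · exact lt_abs.2 (Or.inr (by linarith))
      · exact lt_abs.2 (Or.inl h)
    rw [Real.norm_eq_abs, abs_of_nonneg (Ff_nonneg z t)]
    exact Ff_tail_bound z habs
  have := hcompact.union htail
  rw [Set.union_compl_self] at this
  exact integrableOn_univ.mp this

end Main

theorem stmt1 (z : ℂ) (m : ℝ → ℝ) (c C : ℝ) (hc : 0 < c) (hm : Measurable m)
    (hlb : ∀ t, c ≤ m t) (hub : ∀ t, m t ≤ C) :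
    Integrable (fun t : ℝ =>
      |Real.log (‖1 - z / (t : ℂ)‖) + chi t * z.re / t| * m t) := by
  have hbd : ∀ᵐ t : ℝ, ‖m t‖ ≤ C := by
    refine ae_of_all _ fun t => ?_
    rw [Real.norm_eq_abs, abs_le]
    exact ⟨by linarith [hlb t, hub t], hub t⟩
  have h1 : Integrable (fun t : ℝ => m t * Ff z t) :=
    (Ff_integrable z).bdd_mul hm.aestronglyMeasurable hbd
  have h2 : Integrable (fun t : ℝ => Ff z t * m t) :=
    h1.congr (ae_of_all _ fun t => mul_comm (m t) (Ff z t))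
  simpa [Ff] using h2
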